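/- arXiv:1308.4081 — 2 statements merged into one kernel-verified Lean document; each statement's English description precedes it below -/
import Mathlib

section
/- Two Ferrers boards B = (b_0,...,b_n) and B' = (b_0',...,b_n') with b_0 = b_0' = 0 satisfy f_{k,m}(B) = f_{k,m}(B') for all k if and only if the m-weight root vector ω_m(B) = (−b_0, m−b_1, 2m−b_2, ..., nm−b_n) is a rearrangement of ω_m(B'). -/
/-- The `m`-falling factorial `x↓_{n,m} = x(x-m)(x-2m)⋯(x-(n-1)m)`. -/
def fallFact (x : ℤ) (n m : ℕ) : ℤ := ∏ i ∈ Finset.range n, (x - (m : ℤ) * i)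

/-- The cells of the Ferrers board with column heights `b 0, b 1, …, b n`
(columns 0-indexed, rows 1-indexed). -/
def cells0 (b : ℕ → ℕ) (n : ℕ) : Finset (ℕ × ℕ) :=
  ((Finset.Icc 1 ((Finset.range (n + 1)).sup b)) ×ˢ Finset.range (n + 1)).filter
    fun c => c.1 ≤ b c.2

/-- The `m`-weight of a file placement: `∏_i 1↓_{y_i,m}` where `y_i` is the number
of rooks in row `i`. -/
def wtm (m : ℕ) (F : Finset (ℕ × ℕ)) : ℤ :=
  ∏ i ∈ F.image Prod.fst, fallFact 1 ((F.filter fun c => c.1 = i).card) m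

/-- `f_{k,m}(B)`: the sum of `m`-weights over all file placements (no two rooks in
the same column) of `k` rooks on the board `B = (b_0, …, b_n)`. -/
def fkm (m : ℕ) (b : ℕ → ℕ) (n k : ℕ) : ℤ :=
  ∑ F ∈ (cells0 b n).powerset.filter
      (fun F => (∀ c ∈ F, ∀ c' ∈ F, c.2 = c'.2 → c = c') ∧ F.card = k),
    wtm m F

/-! ### Auxiliary definitions and lemmas -/

/-- The set of file placements of `k` rooks on the board. -/
def plc (b : ℕ → ℕ) (n k : ℕ) : Finset (Finset (ℕ × ℕ)) :=
  (cells0 b n).powerset.filter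
    fun F => (∀ c ∈ F, ∀ c' ∈ F, c.2 = c'.2 → c = c') ∧ F.card = k

lemma fkm_eq (m : ℕ) (b : ℕ → ℕ) (n k : ℕ) :
    fkm m b n k = ∑ F ∈ plc b n k, wtm m F := rfl

lemma mem_cells0 {b : ℕ → ℕ} {n : ℕ} {c : ℕ × ℕ} :
    c ∈ cells0 b n ↔ 1 ≤ c.1 ∧ c.1 ≤ b c.2 ∧ c.2 ≤ n := by
  unfold cells0
  simp only [Finset.mem_filter, Finset.mem_product, Finset.mem_Icc, Finset.mem_range]
  constructor
  · rintro ⟨⟨⟨h1, _⟩, h2⟩, h3⟩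
    exact ⟨h1, h3, by omega⟩
  · rintro ⟨h1, h2, h3⟩
    refine ⟨⟨⟨h1, ?_⟩, by omega⟩, h2⟩
    exact le_trans h2 (Finset.le_sup (Finset.mem_range.mpr (by omega)))

lemma mem_plc {b : ℕ → ℕ} {n k : ℕ} {F : Finset (ℕ × ℕ)} :
    F ∈ plc b n k ↔
      (∀ c ∈ F, 1 ≤ c.1 ∧ c.1 ≤ b c.2 ∧ c.2 ≤ n) ∧
      (∀ c ∈ F, ∀ c' ∈ F, c.2 = c'.2 → c = c') ∧ F.card = k := by
  unfold plc
  simp only [Finset.mem_filter, Finset.mem_powerset, and_assoc]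
  constructor
  · rintro ⟨hsub, h2, h3⟩
    exact ⟨fun c hc => mem_cells0.mp (hsub hc), h2, h3⟩
  · rintro ⟨h1, h2, h3⟩
    exact ⟨fun c hc => mem_cells0.mpr (h1 c hc), h2, h3⟩

lemma wtm_empty (m : ℕ) : wtm m ∅ = 1 := by simp [wtm]

lemma fkm_zero (m : ℕ) (b : ℕ → ℕ) (n : ℕ) : fkm m b n 0 = 1 := by
  rw [fkm_eq]
  have : plc b n 0 = {∅} := by
    ext F
    simp only [mem_plc, Finset.mem_singleton, Finset.card_eq_zero]
    constructor
    · rintro ⟨-, -, rfl⟩; rfl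
    · rintro rfl; simp
  rw [this, Finset.sum_singleton, wtm_empty]

lemma fkm_eq_zero (m : ℕ) (b : ℕ → ℕ) {n k : ℕ} (h : n + 1 < k) : fkm m b n k = 0 := by
  rw [fkm_eq]
  have : plc b n k = ∅ := by
    ext F
    simp only [mem_plc, Finset.notMem_empty, iff_false, not_and]
    intro h1 h2 h3
    have hinj : Set.InjOn Prod.snd (F : Set (ℕ × ℕ)) := fun c hc c' hc' hcc =>
      h2 c hc c' hc' hcc
    have hcard : (F.image Prod.snd).card = F.card := Finset.card_image_of_injOn hinj
    have hsub : F.image Prod.snd ⊆ Finset.range (n + 1) := by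
      intro j hj
      rw [Finset.mem_image] at hj
      obtain ⟨c, hc, rfl⟩ := hj
      exact Finset.mem_range.mpr (by have := (h1 c hc).2.2; omega)
    have := Finset.card_le_card hsub
    rw [hcard, h3] at this
    simp only [Finset.card_range] at this
    omega
  rw [this, Finset.sum_empty]

lemma fallFact_one_succ (m y : ℕ) :
    fallFact 1 (y + 1) m = (1 - (m : ℤ) * y) * fallFact 1 y m := by
  unfold fallFact
  rw [Finset.prod_range_succ]
  ring

lemma wtm_insert (m : ℕ) (F : Finset (ℕ × ℕ)) (c : ℕ × ℕ) (hc : c ∉ F) :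
    wtm m (insert c F) =
      (1 - (m : ℤ) * ((F.filter fun x => x.1 = c.1).card)) * wtm m F := by
  classical
  have hfe : ∀ r, r ≠ c.1 →
      ((insert c F).filter fun x => x.1 = r) = F.filter fun x => x.1 = r := by
    intro r hr
    rw [Finset.filter_insert, if_neg (fun h => hr h.symm)]
  have hcc : ((insert c F).filter fun x => x.1 = c.1)
      = insert c (F.filter fun x => x.1 = c.1) := by
    rw [Finset.filter_insert, if_pos rfl]
  have hcard : ((insert c F).filter fun x => x.1 = c.1).card
      = (F.filter fun x => x.1 = c.1).card + 1 := by
    rw [hcc, Finset.card_insert_of_notMem (fun h => hc (Finset.mem_of_mem_filter _ h))]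
  unfold wtm
  rw [Finset.image_insert]
  by_cases hmem : c.1 ∈ F.image Prod.fst
  · rw [Finset.insert_eq_self.mpr hmem]
    rw [← Finset.mul_prod_erase _
        (fun r => fallFact 1 (((insert c F).filter fun x => x.1 = r).card) m) hmem,
      ← Finset.mul_prod_erase _
        (fun r => fallFact 1 ((F.filter fun x => x.1 = r).card) m) hmem]
    rw [Finset.prod_congr rfl
      (fun r hr => by rw [hfe r (Finset.ne_of_mem_erase hr)])]
    rw [hcard, fallFact_one_succ]
    ring
  · have hF0 : (F.filter fun x => x.1 = c.1) = ∅ := by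
      apply Finset.filter_eq_empty_iff.mpr
      intro x hx h
      exact hmem (Finset.mem_image.mpr ⟨x, hx, h⟩)
    rw [Finset.prod_insert hmem]
    rw [Finset.prod_congr rfl
      (fun r hr => by rw [hfe r (fun h => hmem (h ▸ hr))])]
    rw [hcard, hF0]
    simp only [Finset.card_empty, Nat.cast_zero, mul_zero, sub_zero, zero_add]
    have h1 : fallFact 1 1 m = 1 := by unfold fallFact; simp
    rw [h1, one_mul]

lemma extract {b : ℕ → ℕ} {n k : ℕ} {F : Finset (ℕ × ℕ)}
    (hF : F ∈ plc b (n + 1) (k + 1)) (hex : ¬ ∀ c ∈ F, c.2 ≤ n) :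
    ∃ c₀ : ℕ × ℕ, c₀ ∈ F ∧ c₀.2 = n + 1 ∧ 1 ≤ c₀.1 ∧ c₀.1 ≤ b (n + 1) ∧
      (F.filter fun c => c.2 = n + 1) = {c₀} ∧
      (F.filter fun c => c.2 ≤ n) ∈ plc b n k ∧
      F = insert c₀ (F.filter fun c => c.2 ≤ n) := by
  classical
  rw [mem_plc] at hF
  obtain ⟨hcell, hinj, hcard⟩ := hF
  push_neg at hex
  obtain ⟨c₀, hc₀F, hc₀n⟩ := hex
  have hc2 : c₀.2 = n + 1 := by have := (hcell c₀ hc₀F).2.2; omega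
  have hb1 : 1 ≤ c₀.1 := (hcell c₀ hc₀F).1
  have hb2 : c₀.1 ≤ b (n + 1) := by have := (hcell c₀ hc₀F).2.1; rwa [hc2] at this
  have hsingle : (F.filter fun c => c.2 = n + 1) = {c₀} := by
    ext x
    simp only [Finset.mem_filter, Finset.mem_singleton]
    constructor
    · rintro ⟨hxF, hx2⟩
      exact hinj x hxF c₀ hc₀F (by rw [hx2, hc2])
    · rintro rfl; exact ⟨hc₀F, hc2⟩
  have hneg : (F.filter fun c => ¬ c.2 = n + 1) = F.filter fun c => c.2 ≤ n := by
    apply Finset.filter_congr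
    intro x hx
    have := (hcell x hx).2.2
    constructor <;> intro h <;> omega
  have hunion : F = insert c₀ (F.filter fun c => c.2 ≤ n) := by
    have h0 := Finset.filter_union_filter_not_eq (fun c : ℕ × ℕ => c.2 = n + 1) F
    rw [hsingle, hneg] at h0
    rw [Finset.insert_eq]
    exact h0.symm
  have hplc : (F.filter fun c => c.2 ≤ n) ∈ plc b n k := by
    rw [mem_plc]
    refine ⟨?_, ?_, ?_⟩
    · intro c hc
      rw [Finset.mem_filter] at hc
      exact ⟨(hcell c hc.1).1, (hcell c hc.1).2.1, hc.2⟩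
    · intro c hc c' hc' h
      rw [Finset.mem_filter] at hc hc'
      exact hinj c hc.1 c' hc'.1 h
    · have h0 := Finset.card_filter_add_card_filter_not
        (p := fun c : ℕ × ℕ => c.2 = n + 1) (s := F)
      rw [hsingle, hneg, hcard, Finset.card_singleton] at h0
      omega
  exact ⟨c₀, hc₀F, hc2, hb1, hb2, hsingle, hplc, hunion⟩

lemma fkm_succ (m : ℕ) (b : ℕ → ℕ) (n k : ℕ)
    (hmono : ∀ j, j ≤ n → b j ≤ b (n + 1)) :
    fkm m b (n + 1) (k + 1)
      = fkm m b n (k + 1) + ((b (n + 1) : ℤ) - m * k) * fkm m b n k := by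
  classical
  rw [fkm_eq, fkm_eq, fkm_eq]
  rw [← Finset.sum_filter_add_sum_filter_not (plc b (n + 1) (k + 1))
      (fun F => ∀ c ∈ F, c.2 ≤ n)]
  have hA : (plc b (n + 1) (k + 1)).filter (fun F => ∀ c ∈ F, c.2 ≤ n)
      = plc b n (k + 1) := by
    ext F
    simp only [Finset.mem_filter, mem_plc]
    constructor
    · rintro ⟨⟨h1, h2, h3⟩, h4⟩
      exact ⟨fun c hc => ⟨(h1 c hc).1, (h1 c hc).2.1, h4 c hc⟩, h2, h3⟩
    · rintro ⟨h1, h2, h3⟩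
      exact ⟨⟨fun c hc => ⟨(h1 c hc).1, (h1 c hc).2.1,
        le_trans (h1 c hc).2.2 (by omega)⟩, h2, h3⟩, fun c hc => (h1 c hc).2.2⟩
  rw [hA]
  congr 1
  -- the part with a rook in column n+1
  have hleft : ∀ F ∈ (plc b (n + 1) (k + 1)).filter (fun F => ¬ ∀ c ∈ F, c.2 ≤ n),
      (insert ((((F.filter fun c => c.2 = n + 1).sup Prod.fst : ℕ)), n + 1)
        (F.filter fun c => c.2 ≤ n)) = F := by
    intro F hF
    rw [Finset.mem_filter] at hF
    obtain ⟨c₀, hmem, hc2, _, _, hsingle, _, hunion⟩ := extract hF.1 hF.2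
    rw [hsingle, Finset.sup_singleton]
    rw [← hc2]
    exact hunion.symm
  have hB : ∑ F ∈ (plc b (n + 1) (k + 1)).filter (fun F => ¬ ∀ c ∈ F, c.2 ≤ n), wtm m F
      = ∑ p ∈ (Finset.Icc 1 (b (n + 1))) ×ˢ plc b n k,
          wtm m (insert (p.1, n + 1) p.2) := by
    refine Finset.sum_nbij'
      (i := fun F => (((F.filter fun c => c.2 = n + 1).sup Prod.fst : ℕ),
        F.filter fun c => c.2 ≤ n))
      (j := fun p : ℕ × Finset (ℕ × ℕ) => insert (p.1, n + 1) p.2)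
      ?_ ?_ ?_ ?_ ?_
    · intro F hF
      rw [Finset.mem_filter] at hF
      obtain ⟨c₀, _, hc2, hb1, hb2, hsingle, hplc, _⟩ := extract hF.1 hF.2
      rw [Finset.mem_product]
      refine ⟨?_, hplc⟩
      rw [hsingle, Finset.sup_singleton]
      exact Finset.mem_Icc.mpr ⟨hb1, hb2⟩
    · rintro ⟨r, F'⟩ hp
      dsimp only
      rw [Finset.mem_product, Finset.mem_Icc] at hp
      obtain ⟨⟨hr1, hr2⟩, hF'⟩ := hp
      rw [mem_plc] at hF'
      obtain ⟨hcell, hinj, hcard⟩ := hF'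
      have hnotmem : (r, n + 1) ∉ F' := fun h => by
        have := (hcell _ h).2.2; simp only at this; omega
      rw [Finset.mem_filter]
      constructor
      · rw [mem_plc]
        refine ⟨?_, ?_, ?_⟩
        · intro c hc
          rcases Finset.mem_insert.mp hc with rfl | hc
          · exact ⟨hr1, hr2, le_refl _⟩
          · exact ⟨(hcell c hc).1, (hcell c hc).2.1, by have := (hcell c hc).2.2; omega⟩
        · intro c hc c' hc' h
          rcases Finset.mem_insert.mp hc with rfl | hc <;>
            rcases Finset.mem_insert.mp hc' with rfl | hc'
          · rfl
          · exfalso; have := (hcell c' hc').2.2; rw [← h] at this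
            simp only at this; omega
          · exfalso; have := (hcell c hc).2.2; rw [h] at this
            simp only at this; omega
          · exact hinj c hc c' hc' h
        · rw [Finset.card_insert_of_notMem hnotmem, hcard]
      · push_neg
        exact ⟨(r, n + 1), Finset.mem_insert_self _ _, by omega⟩
    · exact hleft
    · rintro ⟨r, F'⟩ hp
      dsimp only
      rw [Finset.mem_product] at hp
      have hle : ∀ c ∈ F', c.2 ≤ n := fun c hc => ((mem_plc.mp hp.2).1 c hc).2.2
      have h1 : ((insert (r, n + 1) F').filter fun c => c.2 = n + 1) = {(r, n + 1)} := by
        rw [Finset.filter_insert, if_pos rfl,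
          Finset.filter_eq_empty_iff.mpr (fun c hc => by have := hle c hc; omega)]
        rfl
      have h2 : ((insert (r, n + 1) F').filter fun c => c.2 ≤ n) = F' := by
        rw [Finset.filter_insert, if_neg (by omega)]
        exact Finset.filter_true_of_mem hle
      simp [h1, h2]
    · intro F hF
      exact (congrArg (wtm m) (hleft F hF)).symm
  rw [hB, Finset.sum_product_right, Finset.mul_sum]
  refine Finset.sum_congr rfl fun F' hF' => ?_
  rw [mem_plc] at hF'
  obtain ⟨hcell, hinj, hcard⟩ := hF'
  have hnot : ∀ r : ℕ, (r, n + 1) ∉ F' := fun r h => by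
    have := (hcell _ h).2.2; simp only at this; omega
  calc ∑ r ∈ Finset.Icc 1 (b (n + 1)), wtm m (insert (r, n + 1) F')
      = ∑ r ∈ Finset.Icc 1 (b (n + 1)),
          (1 - (m : ℤ) * ((F'.filter fun x => x.1 = r).card)) * wtm m F' := by
        exact Finset.sum_congr rfl fun r _ => wtm_insert m F' (r, n + 1) (hnot r)
    _ = (∑ r ∈ Finset.Icc 1 (b (n + 1)),
          (1 - (m : ℤ) * ((F'.filter fun x => x.1 = r).card))) * wtm m F' := by
        rw [Finset.sum_mul]
    _ = ((b (n + 1) : ℤ) - m * k) * wtm m F' := by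
        congr 1
        have hfib : ∑ r ∈ Finset.Icc 1 (b (n + 1)),
            (F'.filter fun x => x.1 = r).card = k := by
          rw [← hcard]
          exact (Finset.card_eq_sum_card_fiberwise fun c hc =>
            Finset.mem_Icc.mpr ⟨(hcell c hc).1,
              le_trans (hcell c hc).2.1 (hmono c.2 (hcell c hc).2.2)⟩).symm
        have hcast : ∑ r ∈ Finset.Icc 1 (b (n + 1)),
            ((F'.filter fun x => x.1 = r).card : ℤ) = (k : ℤ) := by
          rw [← Nat.cast_sum, hfib]
        rw [Finset.sum_sub_distrib, ← Finset.mul_sum, hcast, Finset.sum_const,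
          Nat.card_Icc]
        simp

lemma sum_fkm_fallFact (m : ℕ) (b : ℕ → ℕ) (hb0 : b 0 = 0) :
    ∀ n, (∀ j k, j ≤ k → k ≤ n → b j ≤ b k) → ∀ x : ℤ,
    ∑ k ∈ Finset.range (n + 2), fkm m b n k * fallFact x (n + 1 - k) m
      = ∏ j ∈ Finset.range (n + 1), (x - ((m : ℤ) * j - b j)) := by
  intro n
  induction n with
  | zero =>
    intro _ x
    have hc : cells0 b 0 = ∅ := by
      ext c
      rw [mem_cells0]
      simp only [Finset.notMem_empty, iff_false, not_and]
      intro h1 h2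
      intro h3
      interval_cases h : c.2
      omega
    have h1 : fkm m b 0 1 = 0 := by
      rw [fkm_eq]
      have : plc b 0 1 = ∅ := by
        ext F
        simp only [plc, Finset.mem_filter, Finset.mem_powerset, hc,
          Finset.subset_empty, Finset.notMem_empty, iff_false, not_and]
        rintro rfl
        simp
      rw [this, Finset.sum_empty]
    rw [Finset.sum_range_succ, Finset.sum_range_succ, Finset.sum_range_zero, h1,
      fkm_zero, Finset.prod_range_one]
    unfold fallFact
    simp [hb0]
  | succ n ih =>
    intro hmono x
    have hmono_n : ∀ j k, j ≤ k → k ≤ n → b j ≤ b k := fun j k h1 h2 =>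
      hmono j k h1 (by omega)
    have hz : fkm m b n (n + 2) = 0 := fkm_eq_zero m b (by omega)
    have h0 : fkm m b (n + 1) 0 = 1 := fkm_zero m b (n + 1)
    have h0' : fkm m b n 0 = 1 := fkm_zero m b n
    have hrec : ∀ k : ℕ, fkm m b (n + 1) (k + 1)
        = fkm m b n (k + 1) + ((b (n + 1) : ℤ) - m * k) * fkm m b n k :=
      fun k => fkm_succ m b n k (fun j hj => hmono j (n + 1) (by omega) (le_refl _))
    have hT : ∑ k ∈ Finset.range (n + 2), fkm m b n (k + 1) * fallFact x (n + 1 - k) m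
        + fallFact x (n + 2) m
        = ∑ k ∈ Finset.range (n + 2),
            fkm m b n k * (fallFact x (n + 1 - k) m * (x - m * ((n : ℤ) + 1 - k))) := by
      have e3 : ∀ k ∈ Finset.range (n + 2), fkm m b n k * fallFact x (n + 2 - k) m
          = fkm m b n k * (fallFact x (n + 1 - k) m * (x - m * ((n : ℤ) + 1 - k))) := by
        intro k hk
        rw [Finset.mem_range] at hk
        have hk' : k ≤ n + 1 := by omega
        have h21 : n + 2 - k = (n + 1 - k) + 1 := by omega
        have hcast : ((n + 1 - k : ℕ) : ℤ) = (n : ℤ) + 1 - k := by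
          rw [Nat.cast_sub hk']
          push_cast
          ring
        rw [h21]
        unfold fallFact
        rw [Finset.prod_range_succ, hcast]
      calc ∑ k ∈ Finset.range (n + 2), fkm m b n (k + 1) * fallFact x (n + 1 - k) m
            + fallFact x (n + 2) m
          = ∑ k ∈ Finset.range (n + 2), fkm m b n (k + 1) * fallFact x (n + 2 - (k + 1)) m
            + fkm m b n 0 * fallFact x (n + 2 - 0) m := by
            rw [h0', one_mul, Nat.sub_zero]
            exact congrArg (· + fallFact x (n + 2) m)
              (Finset.sum_congr rfl fun k hk => by
                have h' : n + 2 - (k + 1) = n + 1 - k := by omega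
                rw [h'])
        _ = ∑ k ∈ Finset.range (n + 2 + 1), fkm m b n k * fallFact x (n + 2 - k) m := by
            rw [Finset.sum_range_succ'
              (fun k => fkm m b n k * fallFact x (n + 2 - k) m) (n + 2)]
        _ = ∑ k ∈ Finset.range (n + 2), fkm m b n k * fallFact x (n + 2 - k) m := by
            rw [Finset.sum_range_succ, hz, zero_mul, add_zero]
        _ = _ := Finset.sum_congr rfl e3
    calc ∑ k ∈ Finset.range (n + 1 + 2), fkm m b (n + 1) k * fallFact x (n + 1 + 1 - k) m
        = ∑ k ∈ Finset.range (n + 2),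
            fkm m b (n + 1) (k + 1) * fallFact x (n + 1 + 1 - (k + 1)) m
          + fkm m b (n + 1) 0 * fallFact x (n + 1 + 1 - 0) m := by
          rw [Finset.sum_range_succ'
            (fun k => fkm m b (n + 1) k * fallFact x (n + 1 + 1 - k) m) (n + 2)]
      _ = ∑ k ∈ Finset.range (n + 2),
            (fkm m b n (k + 1) * fallFact x (n + 1 - k) m
              + ((b (n + 1) : ℤ) - m * k) * (fkm m b n k * fallFact x (n + 1 - k) m))
          + fallFact x (n + 2) m := by
          rw [h0, one_mul, Nat.sub_zero, show n + 1 + 1 = n + 2 by omega]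
          exact congrArg (· + fallFact x (n + 2) m)
            (Finset.sum_congr rfl fun k hk => by
              have h' : n + 2 - (k + 1) = n + 1 - k := by omega
              rw [h', hrec k]
              ring)
      _ = (∑ k ∈ Finset.range (n + 2), fkm m b n (k + 1) * fallFact x (n + 1 - k) m
            + fallFact x (n + 2) m)
          + ∑ k ∈ Finset.range (n + 2),
              ((b (n + 1) : ℤ) - m * k) * (fkm m b n k * fallFact x (n + 1 - k) m) := by
          rw [Finset.sum_add_distrib]
          ring
      _ = ∑ k ∈ Finset.range (n + 2),
            fkm m b n k * fallFact x (n + 1 - k) m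
              * (x - ((m : ℤ) * ((n : ℤ) + 1) - b (n + 1))) := by
          rw [hT, ← Finset.sum_add_distrib]
          refine Finset.sum_congr rfl fun k hk => ?_
          ring
      _ = (∑ k ∈ Finset.range (n + 2), fkm m b n k * fallFact x (n + 1 - k) m)
            * (x - ((m : ℤ) * ((n : ℤ) + 1) - b (n + 1))) := by
          rw [Finset.sum_mul]
      _ = (∏ j ∈ Finset.range (n + 1), (x - ((m : ℤ) * j - b j)))
            * (x - ((m : ℤ) * ((n : ℤ) + 1) - b (n + 1))) := by
          rw [ih hmono_n x]
      _ = ∏ j ∈ Finset.range (n + 1 + 1), (x - ((m : ℤ) * j - b j)) := by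
          conv_rhs => rw [Finset.prod_range_succ]
          push_cast
          ring

lemma fallFact_self_ne_zero {m : ℕ} (hm : 0 < m) (t : ℕ) :
    fallFact ((m : ℤ) * t) t m ≠ 0 := by
  unfold fallFact
  apply ne_of_gt
  apply Finset.prod_pos
  intro i hi
  rw [Finset.mem_range] at hi
  have h1 : (i : ℤ) < t := by exact_mod_cast hi
  have h2 : (0 : ℤ) < m := by exact_mod_cast hm
  nlinarith

lemma fallFact_self_eq_zero {m : ℕ} (t j : ℕ) (h : t < j) :
    fallFact ((m : ℤ) * t) j m = 0 := by
  unfold fallFact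
  exact Finset.prod_eq_zero (Finset.mem_range.mpr h) (by ring)

lemma coeffs_eq_zero (m : ℕ) (hm : 0 < m) (N : ℕ) (g : ℕ → ℤ)
    (h : ∀ x : ℤ, ∑ k ∈ Finset.range N, g k * fallFact x k m = 0) :
    ∀ k, k < N → g k = 0 := by
  intro k
  induction k using Nat.strong_induction_on with
  | _ t ih =>
    intro ht
    have hx := h ((m : ℤ) * t)
    have hzero : ∀ j ∈ Finset.range N, j ≠ t → g j * fallFact ((m : ℤ) * t) j m = 0 := by
      intro j hj hne
      rcases lt_or_gt_of_ne hne with hlt | hgt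
      · rw [ih j hlt (by omega)]; ring
      · rw [fallFact_self_eq_zero t j hgt]; ring
    rw [Finset.sum_eq_single_of_mem t (Finset.mem_range.mpr ht) hzero] at hx
    exact (mul_eq_zero.mp hx).resolve_right (fallFact_self_ne_zero hm t)

/-- Proposition 7.1: two Ferrers boards `B = (b_0,…,b_n)`, `B' = (b'_0,…,b'_n)` with
`b_0 = b'_0 = 0` are `m`-weight file equivalent iff the `m`-weight root vector
`ω_m(B) = (jm − b_j)_j` is a rearrangement of `ω_m(B')`. -/
theorem weight_equiv_iff_root_vector (m n : ℕ) (hm : 0 < m) (b b' : ℕ → ℕ)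
    (hb0 : b 0 = 0) (hb'0 : b' 0 = 0)
    (hmono : ∀ j k, j ≤ k → k ≤ n → b j ≤ b k)
    (hmono' : ∀ j k, j ≤ k → k ≤ n → b' j ≤ b' k) :
    (∀ k, fkm m b n k = fkm m b' n k) ↔
      (Finset.range (n + 1)).val.map (fun j : ℕ => (m : ℤ) * j - b j) =
      (Finset.range (n + 1)).val.map (fun j : ℕ => (m : ℤ) * j - b' j) := by
  constructor
  · intro hf
    have hprod : ∀ x : ℤ, ∏ j ∈ Finset.range (n + 1), (x - ((m : ℤ) * j - b j))
        = ∏ j ∈ Finset.range (n + 1), (x - ((m : ℤ) * j - b' j)) := by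
      intro x
      rw [← sum_fkm_fallFact m b hb0 n hmono x, ← sum_fkm_fallFact m b' hb'0 n hmono' x]
      exact Finset.sum_congr rfl fun k _ => by rw [hf k]
    have hpoly : ∏ j ∈ Finset.range (n + 1),
          (Polynomial.X - Polynomial.C ((m : ℤ) * j - b j))
        = ∏ j ∈ Finset.range (n + 1),
          (Polynomial.X - Polynomial.C ((m : ℤ) * j - b' j)) := by
      apply Polynomial.funext
      intro x
      simpa [Polynomial.eval_prod] using hprod x
    have key : ∀ c : ℕ → ℕ,
        (((Finset.range (n + 1)).val.map (fun j : ℕ => (m : ℤ) * j - c j)).map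
          (fun a => Polynomial.X - Polynomial.C a)).prod
        = ∏ j ∈ Finset.range (n + 1),
          (Polynomial.X - Polynomial.C ((m : ℤ) * j - c j)) := by
      intro c
      rw [Multiset.map_map]
      rfl
    have hfinal := congrArg Polynomial.roots ((key b).trans (hpoly.trans (key b').symm))
    rwa [Polynomial.roots_multiset_prod_X_sub_C, Polynomial.roots_multiset_prod_X_sub_C]
      at hfinal
  · intro hroot
    have e : ∀ (c : ℕ → ℕ) (x : ℤ),
        ∏ j ∈ Finset.range (n + 1), (x - ((m : ℤ) * j - c j))
        = (((Finset.range (n + 1)).val.map (fun j : ℕ => (m : ℤ) * j - c j)).map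
            (fun a => x - a)).prod := by
      intro c x
      rw [Multiset.map_map]
      rfl
    have hprod : ∀ x : ℤ, ∏ j ∈ Finset.range (n + 1), (x - ((m : ℤ) * j - b j))
        = ∏ j ∈ Finset.range (n + 1), (x - ((m : ℤ) * j - b' j)) := by
      intro x
      rw [e b x, e b' x, hroot]
    have h : ∀ x : ℤ, ∑ j ∈ Finset.range (n + 2),
        (fkm m b n (n + 1 - j) - fkm m b' n (n + 1 - j)) * fallFact x j m = 0 := by
      intro x
      rw [← Finset.sum_range_reflect]
      have hcg : ∀ j ∈ Finset.range (n + 2),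
          (fkm m b n (n + 1 - (n + 2 - 1 - j)) - fkm m b' n (n + 1 - (n + 2 - 1 - j)))
            * fallFact x (n + 2 - 1 - j) m
          = (fkm m b n j - fkm m b' n j) * fallFact x (n + 1 - j) m := by
        intro j hj
        rw [Finset.mem_range] at hj
        have e1 : n + 1 - (n + 2 - 1 - j) = j := by omega
        have e2 : n + 2 - 1 - j = n + 1 - j := by omega
        rw [e1, e2]
      rw [Finset.sum_congr rfl hcg]
      simp only [sub_mul]
      rw [Finset.sum_sub_distrib, sum_fkm_fallFact m b hb0 n hmono x,
        sum_fkm_fallFact m b' hb'0 n hmono' x, hprod x, sub_self]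
    have hg := coeffs_eq_zero m hm (n + 2) _ h
    intro k
    by_cases hk : k ≤ n + 1
    · have := hg (n + 1 - k) (by omega)
      have e1 : n + 1 - (n + 1 - k) = k := by omega
      rw [e1] at this
      linarith [this]
    · rw [fkm_eq_zero m b (by omega), fkm_eq_zero m b' (by omega)]
end

section
/- Every Ferrers board B = (b_0,...,b_n) with b_0 = 0 is m-weight file equivalent to a unique m-restricted board. Specifically, after padding B with zeros to N = |B| columns, the weakly increasing rearrangement of ω_m(B) is the m-weight root vector of an m-restricted Ferrers board. -/
namespace URR


lemma mem_cells0 {b : ℕ → ℕ} {n : ℕ} {c : ℕ × ℕ} :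
    c ∈ cells0 b n ↔ 1 ≤ c.1 ∧ c.1 ≤ b c.2 ∧ c.2 ≤ n := by
  simp only [cells0, Finset.mem_filter, Finset.mem_product, Finset.mem_Icc,
    Finset.mem_range, Nat.lt_succ_iff]
  constructor
  · rintro ⟨⟨⟨h1, _⟩, h2⟩, h3⟩; exact ⟨h1, h3, h2⟩
  · rintro ⟨h1, h2, h3⟩
    exact ⟨⟨⟨h1, le_trans h2 (Finset.le_sup (by simp [Nat.lt_succ_iff, h3]))⟩, h3⟩, h2⟩

/-- placements -/
def Pl (b : ℕ → ℕ) (n k : ℕ) : Finset (Finset (ℕ × ℕ)) :=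
  (cells0 b n).powerset.filter
    (fun F => (∀ c ∈ F, ∀ c' ∈ F, c.2 = c'.2 → c = c') ∧ F.card = k)

lemma fkm_eq (m : ℕ) (b : ℕ → ℕ) (n k : ℕ) : fkm m b n k = ∑ F ∈ Pl b n k, wtm m F := rfl

lemma fkm_zero (m : ℕ) (b : ℕ → ℕ) (n : ℕ) : fkm m b n 0 = 1 := by
  have : Pl b n 0 = {∅} := by
    ext F
    simp only [Pl, Finset.mem_filter, Finset.mem_powerset, Finset.mem_singleton,
      Finset.card_eq_zero]
    constructor
    · rintro ⟨-, -, h⟩; exact h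
    · rintro rfl; simp
  rw [fkm_eq, this]
  simp [wtm]

lemma fkm_big (m : ℕ) (b : ℕ → ℕ) (n k : ℕ) (hk : n + 1 < k) : fkm m b n k = 0 := by
  rw [fkm_eq]
  have : Pl b n k = ∅ := by
    ext F
    simp only [Pl, Finset.mem_filter, Finset.mem_powerset, Finset.notMem_empty, iff_false]
    rintro ⟨hsub, hinj, hcard⟩
    -- columns map is injective on F, so card ≤ n+1
    have : F.card ≤ (Finset.range (n+1)).card := by
      apply Finset.card_le_card_of_injOn Prod.snd
      · intro c hc
        exact Finset.mem_range.2 (Nat.lt_succ_of_le (mem_cells0.1 (hsub hc)).2.2)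
      · intro c hc c' hc' h
        exact hinj c hc c' hc' h
    rw [Finset.card_range] at this
    omega
  simp [this]

lemma wtm_empty (m : ℕ) : wtm m ∅ = 1 := by simp [wtm]

lemma fallFact_succ (x : ℤ) (n m : ℕ) :
    fallFact x (n+1) m = fallFact x n m * (x - m * n) := by
  simp [fallFact, Finset.prod_range_succ]




lemma fallFact_one_succ (y m : ℕ) :
    fallFact 1 (y+1) m = fallFact 1 y m * (1 - m * y) := by
  simp [fallFact, Finset.prod_range_succ]

lemma wtm_insert (m : ℕ) (G : Finset (ℕ × ℕ)) (r c : ℕ) (h : (r, c) ∉ G) :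
    wtm m (insert (r, c) G)
      = (1 - (m : ℤ) * (G.filter fun p => p.1 = r).card) * wtm m G := by
  classical
  set y := (G.filter fun p => p.1 = r).card with hy
  have hfilter_ne : ∀ i, i ≠ r →
      ((insert (r, c) G).filter fun p => p.1 = i) = G.filter fun p => p.1 = i := by
    intro i hi
    rw [Finset.filter_insert]
    simp [Ne.symm hi]
  have hfilter_r : ((insert (r, c) G).filter fun p => p.1 = r)
      = insert (r, c) (G.filter fun p => p.1 = r) := by
    rw [Finset.filter_insert]; simp
  have hcard_r : (((insert (r, c) G).filter fun p => p.1 = r)).card = y + 1 := by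
    rw [hfilter_r, Finset.card_insert_of_notMem (by simp [h, Finset.mem_filter])]
  by_cases hr : r ∈ G.image Prod.fst
  · have himg : (insert (r, c) G).image Prod.fst = G.image Prod.fst := by
      rw [Finset.image_insert]
      exact Finset.insert_eq_self.2 hr
    rw [wtm, himg, ← Finset.mul_prod_erase _ _ hr, wtm, ← Finset.mul_prod_erase _ _ hr]
    rw [hcard_r, fallFact_one_succ]
    have : ∀ i ∈ (G.image Prod.fst).erase r,
        fallFact 1 (((insert (r, c) G).filter fun p => p.1 = i).card) m
          = fallFact 1 ((G.filter fun p => p.1 = i).card) m := by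
      intro i hi
      rw [hfilter_ne i (Finset.ne_of_mem_erase hi)]
    rw [Finset.prod_congr rfl this]
    ring
  · have hy0 : y = 0 := by
      rw [hy, Finset.card_eq_zero]
      ext p
      simp only [Finset.mem_filter, Finset.notMem_empty, iff_false, not_and]
      intro hp hp1
      exact hr (Finset.mem_image.2 ⟨p, hp, hp1⟩)
    have himg : (insert (r, c) G).image Prod.fst = insert r (G.image Prod.fst) := by
      rw [Finset.image_insert]
    rw [wtm, himg, Finset.prod_insert hr, hcard_r, hy0, fallFact_one_succ]
    have : ∀ i ∈ G.image Prod.fst,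
        fallFact 1 (((insert (r, c) G).filter fun p => p.1 = i).card) m
          = fallFact 1 ((G.filter fun p => p.1 = i).card) m := by
      intro i hi
      rw [hfilter_ne i (fun hir => hr (hir ▸ hi))]
    rw [Finset.prod_congr rfl this]
    simp [wtm, fallFact, hy0]

lemma mem_Pl {b : ℕ → ℕ} {n k : ℕ} {F : Finset (ℕ × ℕ)} :
    F ∈ Pl b n k ↔ F ⊆ cells0 b n ∧ (∀ c ∈ F, ∀ c' ∈ F, c.2 = c'.2 → c = c') ∧ F.card = k := by
  simp [Pl, Finset.mem_filter, Finset.mem_powerset, and_assoc]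

lemma fkm_rec (m : ℕ) (b : ℕ → ℕ) (n k : ℕ)
    (hmono : ∀ j, j ≤ n → b j ≤ b (n + 1)) :
    fkm m b (n + 1) (k + 1)
      = fkm m b n (k + 1) + ((b (n + 1) : ℤ) - m * k) * fkm m b n k := by

  rw [fkm_eq, ← Finset.sum_filter_add_sum_filter_not (Pl b (n+1) (k+1))
    (fun F => ∀ c ∈ F, c.2 ≠ n + 1)]
  have h1 : (Pl b (n+1) (k+1)).filter (fun F => ∀ c ∈ F, c.2 ≠ n + 1) = Pl b n (k+1) := by
    ext F
    simp only [Finset.mem_filter, mem_Pl]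
    constructor
    · rintro ⟨⟨hsub, hinj, hcard⟩, hcol⟩
      refine ⟨fun c hc => ?_, hinj, hcard⟩
      have := mem_cells0.1 (hsub hc)
      have hne := hcol c hc
      exact mem_cells0.2 ⟨this.1, this.2.1, by omega⟩
    · rintro ⟨hsub, hinj, hcard⟩
      refine ⟨⟨fun c hc => ?_, hinj, hcard⟩, fun c hc => ?_⟩
      · have := mem_cells0.1 (hsub hc)
        exact mem_cells0.2 ⟨this.1, this.2.1, by omega⟩
      · have := mem_cells0.1 (hsub hc); omega
  rw [h1, fkm_eq m b n (k+1)]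
  congr 1
  -- second part
  have h2 : (Pl b (n+1) (k+1)).filter (fun F => ¬ ∀ c ∈ F, c.2 ≠ n + 1)
      = ((Finset.Icc 1 (b (n+1))) ×ˢ Pl b n k).image
          (fun p => insert (p.1, n + 1) p.2) := by
    ext F
    simp only [Finset.mem_filter, Finset.mem_image, Finset.mem_product, mem_Pl,
      Finset.mem_Icc, not_forall]
    constructor
    · rintro ⟨⟨hsub, hinj, hcard⟩, c₀, hc₀, hcol⟩
      simp only [not_not] at hcol
      have hc₀m := mem_cells0.1 (hsub hc₀)
      refine ⟨(c₀.1, F.erase c₀), ⟨⟨hc₀m.1, ?_⟩, ?_, ?_, ?_⟩, ?_⟩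
      · rw [← hcol]; exact hc₀m.2.1
      · intro c hc
        have hcF := Finset.mem_of_mem_erase hc
        have hcm := mem_cells0.1 (hsub hcF)
        have hne : c ≠ c₀ := Finset.ne_of_mem_erase hc
        have : c.2 ≠ n + 1 := by
          intro hcc
          exact hne (hinj c hcF c₀ hc₀ (by rw [hcc, hcol]))
        exact mem_cells0.2 ⟨hcm.1, hcm.2.1, by omega⟩
      · intro c hc c' hc' h
        exact hinj c (Finset.mem_of_mem_erase hc) c' (Finset.mem_of_mem_erase hc') h
      · rw [Finset.card_erase_of_mem hc₀, hcard]
        omega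
      · have : (c₀.1, n + 1) = c₀ := by
          rw [← hcol]
        rw [this, Finset.insert_erase hc₀]
    · rintro ⟨⟨r, G⟩, ⟨⟨hr1, hr2⟩, hGsub, hGinj, hGcard⟩, rfl⟩
      have hnotmem : (r, n + 1) ∉ G := by
        intro hmem
        have := mem_cells0.1 (hGsub hmem)
        omega
      have hGcol : ∀ c ∈ G, c.2 ≤ n := fun c hc => (mem_cells0.1 (hGsub hc)).2.2
      refine ⟨⟨fun c hc => ?_, ?_, ?_⟩, (r, n+1), Finset.mem_insert_self _ _, by simp⟩
      · rcases Finset.mem_insert.1 hc with rfl | hc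
        · exact mem_cells0.2 ⟨hr1, hr2, le_refl _⟩
        · have := mem_cells0.1 (hGsub hc)
          exact mem_cells0.2 ⟨this.1, this.2.1, by omega⟩
      · intro c hc c' hc' h
        rcases Finset.mem_insert.1 hc with rfl | hc <;>
          rcases Finset.mem_insert.1 hc' with rfl | hc'
        · rfl
        · have h2 := hGcol c' hc'
          have h' : n + 1 = c'.2 := h
          omega
        · have h2 := hGcol c hc
          have h' : c.2 = n + 1 := h
          omega
        · exact hGinj c hc c' hc' h
      · rw [Finset.card_insert_of_notMem hnotmem, hGcard]
  rw [h2, Finset.sum_image, fkm_eq]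
  · -- evaluate the double sum
    rw [Finset.sum_product]
    dsimp only
    rw [Finset.sum_comm]
    have key : ∀ G ∈ Pl b n k,
        ∑ r ∈ Finset.Icc 1 (b (n+1)), wtm m (insert (r, n+1) G)
          = ((b (n+1) : ℤ) - m * k) * wtm m G := by
      intro G hG
      obtain ⟨hGsub, hGinj, hGcard⟩ := mem_Pl.1 hG
      have hstep : ∀ r ∈ Finset.Icc 1 (b (n+1)),
          wtm m (insert (r, n+1) G)
            = (1 - (m : ℤ) * (G.filter fun p => p.1 = r).card) * wtm m G := by
        intro r _
        apply wtm_insert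
        intro hmem
        have := mem_cells0.1 (hGsub hmem)
        omega
      rw [Finset.sum_congr rfl hstep, ← Finset.sum_mul]
      congr 1
      have hcards : ∑ r ∈ Finset.Icc 1 (b (n+1)), ((G.filter fun p => p.1 = r).card : ℤ)
          = (k : ℤ) := by
        rw [← Nat.cast_sum]
        norm_cast
        rw [← hGcard]
        symm
        apply Finset.card_eq_sum_card_fiberwise
        intro c hc
        have := mem_cells0.1 (hGsub hc)
        have hle : b c.2 ≤ b (n+1) := hmono c.2 this.2.2
        exact Finset.mem_Icc.2 ⟨this.1, le_trans this.2.1 hle⟩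
      rw [Finset.sum_sub_distrib, ← Finset.mul_sum, hcards]
      simp [Nat.card_Icc]
    rw [Finset.sum_congr rfl key, ← Finset.mul_sum]
  · -- injectivity on the product set
    rintro ⟨r, G⟩ hrG ⟨r', G'⟩ hrG' h
    simp only [Finset.mem_coe, Finset.mem_product, mem_Pl, Finset.mem_Icc] at hrG hrG'
    have hGcol : ∀ c ∈ G, c.2 ≤ n := fun c hc => (mem_cells0.1 (hrG.2.1 hc)).2.2
    have hGcol' : ∀ c ∈ G', c.2 ≤ n := fun c hc => (mem_cells0.1 (hrG'.2.1 hc)).2.2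
    simp only at h
    have hreq : r = r' := by
      have : (r, n+1) ∈ insert (r', n+1) G' := h ▸ Finset.mem_insert_self _ _
      rcases Finset.mem_insert.1 this with heq | hmem
      · exact (Prod.mk.injEq .. ▸ heq).1
      · exact absurd (hGcol' _ hmem) (by simp)
    subst hreq
    have hGeq : G = G' := by
      have hn : (r, n+1) ∉ G := fun hm => absurd (hGcol _ hm) (by simp)
      have hn' : (r, n+1) ∉ G' := fun hm => absurd (hGcol' _ hm) (by simp)
      have := congrArg (fun s => s.erase (r, n+1)) h
      simpa [Finset.erase_insert hn, Finset.erase_insert hn'] using this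
    rw [hGeq]

lemma fkm_col0 (m : ℕ) (b : ℕ → ℕ) : fkm m b 0 1 = (b 0 : ℤ) := by
  rw [fkm_eq]
  have h1 : Pl b 0 1 = (cells0 b 0).image (fun c => {c}) := by
    ext F
    simp only [mem_Pl, Finset.mem_image, Finset.card_eq_one]
    constructor
    · rintro ⟨hsub, -, c, rfl⟩
      exact ⟨c, hsub (Finset.mem_singleton_self c), rfl⟩
    · rintro ⟨c, hc, rfl⟩
      refine ⟨Finset.singleton_subset_iff.2 hc, ?_, c, rfl⟩
      intro a ha a' ha' _
      rw [Finset.mem_singleton.1 ha, Finset.mem_singleton.1 ha']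
  have h2 : ∀ c : ℕ × ℕ, wtm m {c} = 1 := by
    intro c
    simp [wtm, fallFact, Finset.filter_singleton]
  rw [h1, Finset.sum_image (by intro a _ b _ h; simpa using h)]
  simp only [h2, Finset.sum_const, nsmul_eq_mul, mul_one]
  have : (cells0 b 0).card = b 0 := by
    have : cells0 b 0 = (Finset.Icc 1 (b 0)).image (fun r => (r, 0)) := by
      ext c
      simp only [mem_cells0, Finset.mem_image, Finset.mem_Icc]
      constructor
      · rintro ⟨h1, h2, h3⟩
        have h0 : c.2 = 0 := by omega
        refine ⟨c.1, ⟨h1, ?_⟩, ?_⟩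
        · rw [← h0]; exact h2
        · rw [← h0]
      · rintro ⟨r, ⟨hr1, hr2⟩, rfl⟩
        exact ⟨hr1, hr2, le_refl _⟩
    rw [this, Finset.card_image_of_injective _ (by intro a b h; simpa using h),
      Nat.card_Icc]
    omega
  rw [this]

lemma factorization (m : ℕ) (b : ℕ → ℕ) :
    ∀ n, (∀ j k, j ≤ k → k ≤ n → b j ≤ b k) → ∀ x : ℤ,
    ∑ k ∈ Finset.range (n+2), fkm m b n k * fallFact x (n+1-k) m
      = ∏ j ∈ Finset.range (n+1), (x + (b j : ℤ) - m * j) := by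
  intro n
  induction n with
  | zero =>
    intro _ x
    simp [Finset.sum_range_succ, fkm_zero, fkm_col0, fallFact, Finset.prod_range_succ]
  | succ n ih =>
    intro hmono x
    have ihx := ih (fun j k hj hk => hmono j k hj (le_trans hk (Nat.le_succ n))) x
    rw [Finset.prod_range_succ, ← ihx]
    have hrec : ∀ k : ℕ, fkm m b (n+1) (k+1)
        = fkm m b n (k+1) + ((b (n+1) : ℤ) - m * k) * fkm m b n k :=
      fun k => fkm_rec m b n k (fun j hj => hmono j (n+1) (by omega) (le_refl _))
    rw [show n+1+2 = (n+2)+1 from rfl,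
      Finset.sum_range_succ' (fun k => fkm m b (n+1) k * fallFact x (n+1+1-k) m) (n+2)]
    simp only [Nat.succ_sub_succ_eq_sub, Nat.sub_zero, fkm_zero, one_mul]
    have expand : ∀ k ∈ Finset.range (n+2),
        fkm m b (n+1) (k+1) * fallFact x (n+1-k) m
          = fkm m b n (k+1) * fallFact x (n+1-k) m
            + fkm m b n k * (((b (n+1):ℤ) - m*k) * fallFact x (n+1-k) m) := by
      intro k _
      rw [hrec k]; ring
    rw [Finset.sum_congr rfl expand, Finset.sum_add_distrib]
    have hterm : ∀ k ∈ Finset.range (n+2),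
        fkm m b n k * fallFact x (n+1-k) m * (x + ((b (n+1):ℤ)) - (m:ℤ) * ((n+1 : ℕ) : ℤ))
          = fkm m b n k * fallFact x (n+2-k) m
            + fkm m b n k * (((b (n+1):ℤ) - m*k) * fallFact x (n+1-k) m) := by
      intro k hk
      have hk' : k ≤ n + 1 := by
        have := Finset.mem_range.1 hk; omega
      have h1 : n + 2 - k = (n + 1 - k) + 1 := by omega
      have h2 : ((n + 1 - k : ℕ) : ℤ) = (n:ℤ) + 1 - k := by
        omega
      rw [h1, fallFact_succ, h2]
      push_cast
      ring
    rw [Finset.sum_mul, Finset.sum_congr rfl hterm, Finset.sum_add_distrib]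
    -- remains: S1 + x↓_{n+2} = T1  (plus common S2)
    have hS1 : ∑ k ∈ Finset.range (n+2), fkm m b n (k+1) * fallFact x (n+1-k) m
        = ∑ k ∈ Finset.range (n+1), fkm m b n (k+1) * fallFact x (n+1-k) m := by
      rw [Finset.sum_range_succ, fkm_big m b n (n+2) (by omega)]
      simp
    have hT1 : ∑ k ∈ Finset.range (n+2), fkm m b n k * fallFact x (n+2-k) m
        = (∑ k ∈ Finset.range (n+1), fkm m b n (k+1) * fallFact x (n+1-k) m)
          + fallFact x (n+2) m := by
      rw [Finset.sum_range_succ' (fun k => fkm m b n k * fallFact x (n+2-k) m) (n+1)]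
      simp only [Nat.succ_sub_succ_eq_sub, Nat.sub_zero, fkm_zero, one_mul]
    rw [hS1, hT1]
    ring



lemma fallFact_zero_of_lt (m t n : ℕ) (h : t < n) : fallFact ((m:ℤ) * t) n m = 0 := by
  apply Finset.prod_eq_zero (Finset.mem_range.2 h)
  ring

lemma fallFact_pos (m t : ℕ) (hm : 0 < m) : 0 < fallFact ((m:ℤ) * t) t m := by
  apply Finset.prod_pos
  intro i hi
  have hi' := Finset.mem_range.1 hi
  have : ((m:ℤ) * t - m * i) = m * (t - i : ℤ) := by ring
  rw [this]
  apply mul_pos (by exact_mod_cast hm)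
  omega

lemma coeff_unique (m : ℕ) (hm : 0 < m) (K : ℕ) (d : ℕ → ℤ)
    (h : ∀ x : ℤ, ∑ k ∈ Finset.range (K+1), d k * fallFact x (K-k) m = 0) :
    ∀ k ≤ K, d k = 0 := by
  have main : ∀ t, t ≤ K → d (K - t) = 0 := by
    intro t
    induction t using Nat.strong_induction_on with
    | _ t IH =>
      intro htK
      have hx := h ((m:ℤ) * t)
      rw [Finset.sum_eq_single (K - t)] at hx
      · rw [show K - (K - t) = t by omega] at hx
        have hpos := fallFact_pos m t hm
        rcases mul_eq_zero.1 hx with h' | h'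
        · exact h'
        · exact absurd h' (ne_of_gt hpos)
      · intro k hk hne
        have hk' : k ≤ K := by have := Finset.mem_range.1 hk; omega
        rcases lt_or_ge t (K - k) with hlt | hle
        · rw [fallFact_zero_of_lt m t (K - k) hlt, mul_zero]
        · have hKk : K - k < t := by omega
          have := IH (K - k) hKk (by omega)
          rw [show K - (K - k) = k by omega] at this
          rw [this, zero_mul]
      · intro hmem
        exact absurd (Finset.mem_range.2 (by omega)) hmem
  intro k hk
  have := main (K - k) (by omega)
  rwa [show K - (K - k) = k by omega] at this

lemma coeff_unique' (m : ℕ) (hm : 0 < m) (K : ℕ) (a c : ℕ → ℤ)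
    (h : ∀ x : ℤ, ∑ k ∈ Finset.range (K+1), a k * fallFact x (K-k) m
        = ∑ k ∈ Finset.range (K+1), c k * fallFact x (K-k) m) :
    ∀ k ≤ K, a k = c k := by
  have := coeff_unique m hm K (fun k => a k - c k) (fun x => by
    simp only [sub_mul, Finset.sum_sub_distrib, h x, sub_self])
  intro k hk
  exact sub_eq_zero.mp (this k hk)

/-- shifting columns up by `d` preserves `wtm`. -/
lemma wtm_image_shift (m d : ℕ) (F : Finset (ℕ × ℕ)) :
    wtm m (F.image (fun p => (p.1, p.2 + d))) = wtm m F := by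
  classical
  have hinj : Function.Injective (fun p : ℕ × ℕ => (p.1, p.2 + d)) := by
    intro p q h
    simp only [Prod.mk.injEq] at h
    exact Prod.ext h.1 (by omega)
  have himg : (F.image (fun p => (p.1, p.2 + d))).image Prod.fst = F.image Prod.fst := by
    rw [Finset.image_image]
    rfl
  rw [wtm, wtm, himg]
  apply Finset.prod_congr rfl
  intro i _
  congr 1
  have : (F.image (fun p => (p.1, p.2 + d))).filter (fun c => c.1 = i)
      = (F.filter (fun c => c.1 = i)).image (fun p => (p.1, p.2 + d)) := by
    ext q
    simp only [Finset.mem_filter, Finset.mem_image]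
    constructor
    · rintro ⟨⟨p, hp, rfl⟩, hq⟩
      exact ⟨p, ⟨hp, hq⟩, rfl⟩
    · rintro ⟨p, ⟨hp, hq⟩, rfl⟩
      exact ⟨⟨p, hp, rfl⟩, hq⟩
  rw [this, Finset.card_image_of_injective _ hinj]

lemma fkm_of_image (m : ℕ) (b c : ℕ → ℕ) (n N d : ℕ)
    (hcells : cells0 c N = (cells0 b n).image (fun p => (p.1, p.2 + d))) (k : ℕ) :
    fkm m c N k = fkm m b n k := by
  classical
  have hinj : Function.Injective (fun p : ℕ × ℕ => (p.1, p.2 + d)) := by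
    intro p q h
    simp only [Prod.mk.injEq] at h
    exact Prod.ext h.1 (by omega)
  rw [fkm_eq, fkm_eq]
  have hPl : Pl c N k = (Pl b n k).image (fun F => F.image (fun p => (p.1, p.2 + d))) := by
    ext F
    simp only [mem_Pl, Finset.mem_image]
    constructor
    · rintro ⟨hsub, hcolinj, hcard⟩
      have hd : ∀ r ∈ F, d ≤ r.2 := by
        intro r hr
        have hm := hsub hr
        rw [hcells, Finset.mem_image] at hm
        obtain ⟨r', -, rfl⟩ := hm
        simp
      refine ⟨F.image (fun p => (p.1, p.2 - d)), ⟨?_, ?_, ?_⟩, ?_⟩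
      · intro p hp
        simp only [Finset.mem_image] at hp
        obtain ⟨q, hq, rfl⟩ := hp
        have hm := hsub hq
        rw [hcells, Finset.mem_image] at hm
        obtain ⟨q', hq', rfl⟩ := hm
        simpa using hq'
      · intro p hp p' hp' hpp
        simp only [Finset.mem_image] at hp hp'
        obtain ⟨q, hq, rfl⟩ := hp
        obtain ⟨q', hq', rfl⟩ := hp'
        have h3 : q.2 - d = q'.2 - d := hpp
        have h4 := hd q hq
        have h5 := hd q' hq'
        have h2 : q.2 = q'.2 := by omega
        rw [hcolinj q hq q' hq' h2]
      · rw [Finset.card_image_of_injOn, hcard]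
        intro p hp p' hp' hpp
        simp only [Prod.mk.injEq] at hpp
        have := hd p hp
        have := hd p' hp'
        exact Prod.ext hpp.1 (by omega)
      · rw [Finset.image_image]
        have heq : Set.EqOn ((fun p : ℕ × ℕ => (p.1, p.2 + d)) ∘ (fun p : ℕ × ℕ => (p.1, p.2 - d))) id ↑F := by
          intro p hp
          have := hd p (by simpa using hp)
          simp only [Function.comp_apply, id]
          exact Prod.ext rfl (by omega)
        rw [Finset.image_congr heq, Finset.image_id]
    · rintro ⟨G, ⟨hsub, hcolinj, hcard⟩, rfl⟩
      refine ⟨?_, ?_, ?_⟩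
      · intro p hp
        simp only [Finset.mem_image] at hp
        obtain ⟨q, hq, rfl⟩ := hp
        rw [hcells, Finset.mem_image]
        exact ⟨q, hsub hq, rfl⟩
      · intro p hp p' hp' hpp
        simp only [Finset.mem_image] at hp hp'
        obtain ⟨q, hq, rfl⟩ := hp
        obtain ⟨q', hq', rfl⟩ := hp'
        have : q.2 = q'.2 := by
          have : q.2 + d = q'.2 + d := hpp
          omega
        rw [hcolinj q hq q' hq' this]
      · rw [Finset.card_image_of_injective _ hinj, hcard]
  rw [hPl, Finset.sum_image]
  · apply Finset.sum_congr rfl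
    intro G _
    exact wtm_image_shift m d G
  · intro G _ G' _ h
    exact Finset.image_injective hinj h

def bt (n N : ℕ) (b : ℕ → ℕ) : ℕ → ℕ := fun j => if N ≤ j + n then b (j + n - N) else 0

section
variable {m n N : ℕ} {b : ℕ → ℕ}

lemma zero_prefix (hmono : ∀ j k, j ≤ k → k ≤ n → b j ≤ b k)
    (hN : N = ∑ j ∈ Finset.range (n + 1), b j) (i : ℕ) (hi : i ≤ n) (h : i + N ≤ n) :
    b i = 0 := by
  by_contra h0
  have h1 : ∀ j ∈ Finset.Icc i n, 1 ≤ b j := by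
    intro j hj
    obtain ⟨hj1, hj2⟩ := Finset.mem_Icc.1 hj
    have := hmono i j hj1 hj2
    omega
  have h2 : (Finset.Icc i n).card ≤ ∑ j ∈ Finset.Icc i n, b j := by
    calc (Finset.Icc i n).card = ∑ j ∈ Finset.Icc i n, 1 := by simp
    _ ≤ _ := Finset.sum_le_sum h1
  have h3 : ∑ j ∈ Finset.Icc i n, b j ≤ ∑ j ∈ Finset.range (n+1), b j := by
    apply Finset.sum_le_sum_of_subset
    intro j hj
    simp only [Finset.mem_Icc] at hj
    exact Finset.mem_range.2 (by omega)
  rw [Nat.card_Icc] at h2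
  omega

lemma bt_zero (hb0 : b 0 = 0) (hmono : ∀ j k, j ≤ k → k ≤ n → b j ≤ b k)
    (hN : N = ∑ j ∈ Finset.range (n + 1), b j) : bt n N b 0 = 0 := by
  unfold bt
  split
  · rcases Nat.lt_or_ge N n with h | h
    · have h0 : 0 + n - N = n - N := by omega
      rw [h0]
      exact zero_prefix hmono hN (n - N) (by omega) (by omega)
    · have : 0 + n - N = 0 := by omega
      rw [this, hb0]
  · rfl

lemma bt_mono (hmono : ∀ j k, j ≤ k → k ≤ n → b j ≤ b k) :
    ∀ j k, j ≤ k → k ≤ N → bt n N b j ≤ bt n N b k := by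
  intro j k hjk hk
  unfold bt
  rcases le_or_gt N (j + n) with h | h
  · rw [if_pos h, if_pos (by omega)]
    exact hmono _ _ (by omega) (by omega)
  · rw [if_neg (by omega)]
    exact Nat.zero_le _

lemma bt_sum (hmono : ∀ j k, j ≤ k → k ≤ n → b j ≤ b k)
    (hN : N = ∑ j ∈ Finset.range (n + 1), b j) :
    ∑ j ∈ Finset.range (N + 1), bt n N b j = N := by
  rw [← Finset.sum_filter_add_sum_filter_not (Finset.range (N+1)) (fun j => N ≤ j + n)]
  have h2 : ∑ j ∈ (Finset.range (N+1)).filter (fun j => ¬ N ≤ j + n), bt n N b j = 0 := by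
    apply Finset.sum_eq_zero
    intro j hj
    simp only [Finset.mem_filter] at hj
    exact if_neg hj.2
  rw [h2, add_zero]
  have h1 : ∑ j ∈ (Finset.range (N+1)).filter (fun j => N ≤ j + n), bt n N b j
      = ∑ i ∈ Finset.Icc (n - N) n, b i := by
    apply Finset.sum_nbij' (fun j => j + n - N) (fun i => i + N - n)
    · intro j hj
      simp only [Finset.mem_filter, Finset.mem_range] at hj
      exact Finset.mem_Icc.2 ⟨by omega, by omega⟩
    · intro i hi
      simp only [Finset.mem_Icc] at hi
      simp only [Finset.mem_filter, Finset.mem_range]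
      omega
    · intro j hj
      simp only [Finset.mem_filter, Finset.mem_range] at hj
      omega
    · intro i hi
      simp only [Finset.mem_Icc] at hi
      omega
    · intro j hj
      simp only [Finset.mem_filter, Finset.mem_range] at hj
      unfold bt
      rw [if_pos hj.2]
  rw [h1]
  have h3 : ∑ i ∈ Finset.range (n - N), b i = 0 := by
    apply Finset.sum_eq_zero
    intro i hi
    simp only [Finset.mem_range] at hi
    exact zero_prefix hmono hN i (by omega) (by omega)
  have h4 : Finset.range (n+1) = Finset.range (n - N) ∪ Finset.Icc (n - N) n := by
    ext i
    simp only [Finset.mem_range, Finset.mem_union, Finset.mem_Icc]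
    omega
  have h5 : ∑ i ∈ Finset.range (n+1), b i
      = ∑ i ∈ Finset.range (n - N), b i + ∑ i ∈ Finset.Icc (n - N) n, b i := by
    rw [h4]
    apply Finset.sum_union
    rw [Finset.disjoint_left]
    intro x hx1 hx2
    simp only [Finset.mem_range] at hx1
    simp only [Finset.mem_Icc] at hx2
    omega
  omega

lemma bt_le (hmono : ∀ j k, j ≤ k → k ≤ n → b j ≤ b k)
    (hN : N = ∑ j ∈ Finset.range (n + 1), b j) :
    ∀ j ≤ N, bt n N b j ≤ j := by
  intro j hj
  by_contra hcon
  push_neg at hcon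
  have h1 : ∀ i ∈ Finset.Icc j N, bt n N b j ≤ bt n N b i := by
    intro i hi
    obtain ⟨hi1, hi2⟩ := Finset.mem_Icc.1 hi
    exact bt_mono hmono j i hi1 hi2
  have h2 : (Finset.Icc j N).card * bt n N b j ≤ ∑ i ∈ Finset.Icc j N, bt n N b i := by
    calc (Finset.Icc j N).card * bt n N b j = ∑ i ∈ Finset.Icc j N, bt n N b j := by
          rw [Finset.sum_const, smul_eq_mul]
    _ ≤ _ := Finset.sum_le_sum h1
  have h3 : ∑ i ∈ Finset.Icc j N, bt n N b i ≤ N := by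
    have hsub : ∑ i ∈ Finset.Icc j N, bt n N b i ≤ ∑ i ∈ Finset.range (N+1), bt n N b i := by
      apply Finset.sum_le_sum_of_subset
      intro i hi
      simp only [Finset.mem_Icc] at hi
      exact Finset.mem_range.2 (by omega)
    rw [bt_sum hmono hN] at hsub
    exact hsub
  rw [Nat.card_Icc] at h2
  set t := bt n N b j with ht
  set u := N - j with hu
  have h6 : N + 1 - j = u + 1 := by omega
  rw [h6] at h2
  have h7 : (u+1) * (j+1) ≤ (u+1) * t := Nat.mul_le_mul_left _ (by omega)
  have h8 : (u+1) * (j+1) = u*j + u + j + 1 := by ring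
  omega

lemma cells_bt_ge (hmono : ∀ j k, j ≤ k → k ≤ n → b j ≤ b k) (hge : n ≤ N) :
    cells0 (bt n N b) N = (cells0 b n).image (fun p => (p.1, p.2 + (N - n))) := by
  ext ⟨r, c⟩
  simp only [mem_cells0, Finset.mem_image, Prod.mk.injEq]
  constructor
  · rintro ⟨h1, h2, h3⟩
    have hcond : N ≤ c + n := by
      by_contra hc
      unfold bt at h2
      rw [if_neg (by omega)] at h2
      omega
    unfold bt at h2
    rw [if_pos hcond] at h2
    exact ⟨(r, c + n - N), ⟨h1, h2, by omega⟩, rfl, by omega⟩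
  · rintro ⟨⟨r', c'⟩, ⟨h1, h2, h3⟩, he1, he2⟩
    subst he1
    subst he2
    refine ⟨h1, ?_, by omega⟩
    unfold bt
    rw [if_pos (by omega)]
    have hc : c' + (N - n) + n - N = c' := by omega
    rw [hc]
    exact h2

lemma cells_bt_lt (hmono : ∀ j k, j ≤ k → k ≤ n → b j ≤ b k)
    (hN : N = ∑ j ∈ Finset.range (n + 1), b j) (hlt : N < n) :
    cells0 b n = (cells0 (bt n N b) N).image (fun p => (p.1, p.2 + (n - N))) := by
  ext ⟨r, c⟩
  simp only [mem_cells0, Finset.mem_image, Prod.mk.injEq]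
  constructor
  · rintro ⟨h1, h2, h3⟩
    have hc : n - N ≤ c := by
      by_contra hcon
      have := zero_prefix hmono hN c (by omega) (by omega)
      omega
    refine ⟨(r, c - (n - N)), ⟨h1, ?_, by omega⟩, rfl, by omega⟩
    unfold bt
    rw [if_pos (by omega)]
    have : c - (n - N) + n - N = c := by omega
    rw [this]
    exact h2
  · rintro ⟨⟨r', c'⟩, ⟨h1, h2, h3⟩, he1, he2⟩
    subst he1
    subst he2
    unfold bt at h2
    rw [if_pos (by omega)] at h2
    refine ⟨h1, ?_, by omega⟩
    have : c' + n - N = c' + (n - N) := by omega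
    rw [this] at h2
    exact h2

end



/-- products over `range l.length` of `f (getD)` equal list products -/
lemma prod_getD (l : List ℤ) (f : ℤ → ℤ) :
    ∏ j ∈ Finset.range l.length, f (l.getD j 0) = (l.map f).prod := by
  induction l with
  | nil => simp
  | cons a t ih =>
    rw [List.length_cons, Finset.prod_range_succ', List.map_cons, List.prod_cons]
    simp only [List.getD_cons_succ, List.getD_cons_zero]
    rw [ih]
    ring

lemma finset_prod_eq_list (g : ℕ → ℤ) (M : ℕ) :
    ∏ j ∈ Finset.range M, g j = ((List.range M).map g).prod := by
  induction M with
  | zero => simp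
  | succ M ih => rw [Finset.prod_range_succ, List.range_succ]; simp [ih]

lemma sorted_getD_mono {l : List ℤ} (hs : List.Pairwise (· ≤ ·) l) {i j : ℕ}
    (hij : i ≤ j) (hj : j < l.length) : l.getD i 0 ≤ l.getD j 0 := by
  rcases eq_or_lt_of_le hij with rfl | hlt
  · exact le_refl _
  · have hi : i < l.length := lt_trans hlt hj
    rw [List.getD_eq_get l 0 ⟨i, hi⟩, List.getD_eq_get l 0 ⟨j, hj⟩]
    exact List.pairwise_iff_get.1 hs ⟨i, hi⟩ ⟨j, hj⟩ hlt

lemma getD_mem {l : List ℤ} {j : ℕ} (hj : j < l.length) : l.getD j 0 ∈ l := by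
  rw [List.getD_eq_get l 0 ⟨j, hj⟩]
  exact List.get_mem l ⟨j, hj⟩

/-- in a sorted list, an element greater than the `j`-th entry is at least the `(j+1)`-th entry -/
lemma sorted_gt_getD {l : List ℤ} (hs : List.Pairwise (· ≤ ·) l) {j : ℕ} {x : ℤ}
    (hx : x ∈ l) (hgt : l.getD j 0 < x) (hj1 : j + 1 < l.length) :
    l.getD (j+1) 0 ≤ x := by
  obtain ⟨⟨p, hp⟩, rfl⟩ := List.mem_iff_get.1 hx
  rcases Nat.lt_or_ge p (j+1) with h | h
  · have : l.get ⟨p, hp⟩ ≤ l.getD j 0 := by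
      rw [List.getD_eq_get l 0 ⟨j, (by omega : j < l.length)⟩]
      rcases Nat.lt_or_ge p j with h2 | h2
      · exact List.pairwise_iff_get.1 hs ⟨p, hp⟩ ⟨j, by omega⟩ h2
      · have : p = j := by omega
        subst this
        exact le_refl _
    omega
  · rw [List.getD_eq_get l 0 ⟨j+1, hj1⟩]
    rcases Nat.lt_or_ge (j+1) p with h2 | h2
    · exact List.pairwise_iff_get.1 hs ⟨j+1, hj1⟩ ⟨p, hp⟩ h2
    · have : p = j + 1 := by omega
      subst this
      exact le_refl _

/-- counting: in a sorted list, if the `j`-th entry exceeds `v` then at most `j`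
entries are `≤ v`. -/
lemma sorted_countP_le {l : List ℤ} (hs : List.Pairwise (· ≤ ·) l) {j : ℕ} {v : ℤ}
    (hj : j < l.length) (hv : v < l.getD j 0) :
    l.countP (fun x => decide (x ≤ v)) ≤ j := by
  have hsplit := List.take_append_drop j l
  have h1 : l.countP (fun x => decide (x ≤ v))
      = (l.take j).countP (fun x => decide (x ≤ v))
        + (l.drop j).countP (fun x => decide (x ≤ v)) := by
    conv_lhs => rw [← hsplit]
    exact List.countP_append
  have h2 : (l.drop j).countP (fun x => decide (x ≤ v)) = 0 := by
    rw [List.countP_eq_zero]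
    intro a ha
    obtain ⟨⟨p, hp⟩, rfl⟩ := List.mem_iff_get.1 ha
    have hjp : j + p < l.length := by
      rw [List.length_drop] at hp; omega
    have hgd : (l.drop j).get ⟨p, hp⟩ = l.get ⟨j + p, hjp⟩ := by simp [List.getElem_drop]
    rw [hgd]
    have : l.getD j 0 ≤ l.get ⟨j + p, hjp⟩ := by
      rw [List.getD_eq_get l 0 ⟨j, hj⟩]
      rcases Nat.eq_or_lt_of_le (Nat.le_add_right j p) with h | h
      · exact le_of_eq (congrArg _ (Fin.ext h))
      · exact List.pairwise_iff_get.1 hs ⟨j, hj⟩ ⟨j + p, hjp⟩ h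
    simp only [decide_eq_true_eq]
    omega
  have h3 : (l.take j).countP (fun x => decide (x ≤ v)) ≤ j := by
    calc (l.take j).countP _ ≤ (l.take j).length := List.countP_le_length
    _ ≤ j := by rw [List.length_take]; omega
  omega

/-- two pointwise-monotone integer sequences whose multisets of values on
`range (N+1)` agree are equal on `0..N`. -/
lemma mono_seq_eq (N : ℕ) (u v : ℕ → ℤ)
    (hu : ∀ j k, j ≤ k → k ≤ N → u j ≤ u k) (hv : ∀ j k, j ≤ k → k ≤ N → v j ≤ v k)
    (h : ((List.range (N+1)).map u : Multiset ℤ) = ((List.range (N+1)).map v : Multiset ℤ)) :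
    ∀ j ≤ N, u j = v j := by
  have hperm := Multiset.coe_eq_coe.1 h
  have hsortu : List.Pairwise (· ≤ ·) ((List.range (N+1)).map u) := by
    rw [List.pairwise_iff_get]
    intro i j hij
    simp only [List.get_eq_getElem, List.getElem_map, List.getElem_range]
    have hjl : (j : ℕ) < N + 1 := by
      have := j.2
      simpa using this
    exact hu i j (le_of_lt hij) (by omega)
  have hsortv : List.Pairwise (· ≤ ·) ((List.range (N+1)).map v) := by
    rw [List.pairwise_iff_get]
    intro i j hij
    simp only [List.get_eq_getElem, List.getElem_map, List.getElem_range]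
    have hjl : (j : ℕ) < N + 1 := by
      have := j.2
      simpa using this
    exact hv i j (le_of_lt hij) (by omega)
  have heq : (List.range (N+1)).map u = (List.range (N+1)).map v :=
    List.Perm.eq_of_pairwise' hsortu hsortv hperm
  intro j hj
  have hlen : j < ((List.range (N+1)).map u).length := by simpa using (by omega : j < N+1)
  have hlen' : j < ((List.range (N+1)).map v).length := by simpa using (by omega : j < N+1)
  have h1 := congrArg (fun l : List ℤ => l.getD j 0) heq
  rw [List.getD_eq_get _ 0 ⟨j, hlen⟩, List.getD_eq_get _ 0 ⟨j, hlen'⟩] at h1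
  simpa using h1

/-- from equality of products of linear factors at every integer, equality of root
multisets. -/
lemma roots_multiset_eq (N : ℕ) (u v : ℕ → ℤ)
    (h : ∀ x : ℤ, ∏ j ∈ Finset.range (N+1), (x - u j) = ∏ j ∈ Finset.range (N+1), (x - v j)) :
    ((List.range (N+1)).map u : Multiset ℤ) = ((List.range (N+1)).map v : Multiset ℤ) := by
  classical
  have hpoly : ∏ j ∈ Finset.range (N+1), (Polynomial.X - Polynomial.C (u j))
      = ∏ j ∈ Finset.range (N+1), (Polynomial.X - Polynomial.C (v j)) := by
    apply Polynomial.funext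
    intro x
    rw [Polynomial.eval_prod, Polynomial.eval_prod]
    simp only [Polynomial.eval_sub, Polynomial.eval_X, Polynomial.eval_C]
    exact h x
  have hru : (∏ j ∈ Finset.range (N+1), (Polynomial.X - Polynomial.C (u j))).roots
      = ((Finset.range (N+1)).val.map u) := by
    rw [Finset.prod_eq_multiset_prod]
    have : Multiset.map (fun j => Polynomial.X - Polynomial.C (u j)) (Finset.range (N+1)).val
        = Multiset.map (fun a => Polynomial.X - Polynomial.C a) ((Finset.range (N+1)).val.map u) := by
      rw [Multiset.map_map]
      rfl
    rw [this]
    exact Polynomial.roots_multiset_prod_X_sub_C _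
  have hrv : (∏ j ∈ Finset.range (N+1), (Polynomial.X - Polynomial.C (v j))).roots
      = ((Finset.range (N+1)).val.map v) := by
    rw [Finset.prod_eq_multiset_prod]
    have : Multiset.map (fun j => Polynomial.X - Polynomial.C (v j)) (Finset.range (N+1)).val
        = Multiset.map (fun a => Polynomial.X - Polynomial.C a) ((Finset.range (N+1)).val.map v) := by
      rw [Multiset.map_map]
      rfl
    rw [this]
    exact Polynomial.roots_multiset_prod_X_sub_C _
  have := hru ▸ hrv ▸ congrArg Polynomial.roots hpoly
  -- (range (N+1)).val = ↑(List.range (N+1))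
  have hval : (Finset.range (N+1)).val = (↑(List.range (N+1)) : Multiset ℕ) := by
    rw [Finset.range_val]
    rfl
  rw [hval] at this
  simpa [Multiset.map_coe] using this


lemma exists_bprime (m N : ℕ) (hm : 0 < m) (c : ℕ → ℕ)
    (hmono : ∀ j k, j ≤ k → k ≤ N → c j ≤ c k) (hle : ∀ j, j ≤ N → c j ≤ j) :
    ∃ b' : ℕ → ℕ, b' 0 = 0 ∧ (∀ j k, j ≤ k → k ≤ N → b' j ≤ b' k) ∧
      (∀ j, j < N → b' (j+1) ≤ b' j + m) ∧
      (∀ x : ℤ, ∏ j ∈ Finset.range (N+1), (x - ((m:ℤ)*j - b' j))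
          = ∏ j ∈ Finset.range (N+1), (x - ((m:ℤ)*j - c j))) := by
  classical
  set ω : ℕ → ℤ := fun j => (m:ℤ)*j - c j with hω
  set L : List ℤ := (List.range (N+1)).map ω with hL
  set S : List ℤ := Multiset.sort (↑L : Multiset ℤ) (· ≤ ·) with hS
  have hSL : (↑S : Multiset ℤ) = (↑L : Multiset ℤ) := Multiset.sort_eq _ _
  have hperm : S.Perm L := Multiset.coe_eq_coe.1 hSL
  have hsort : List.Pairwise (· ≤ ·) S := Multiset.pairwise_sort _ _
  have hlen : S.length = N + 1 := by
    rw [hS, Multiset.length_sort]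
    simp [hL]
  set σ : ℕ → ℤ := fun j => S.getD j 0 with hσ
  have hmemS : ∀ x ∈ S, ∃ i, i ≤ N ∧ ω i = x := by
    intro x hx
    have := hperm.mem_iff.1 hx
    rw [hL, List.mem_map] at this
    obtain ⟨i, hi, he⟩ := this
    exact ⟨i, by simpa [Nat.lt_succ_iff] using List.mem_range.1 hi, he⟩
  have hωmemS : ∀ i, i ≤ N → ω i ∈ S := by
    intro i hi
    rw [hperm.mem_iff, hL, List.mem_map]
    exact ⟨i, List.mem_range.2 (by omega), rfl⟩
  have hnonneg : ∀ x ∈ S, 0 ≤ x := by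
    intro x hx
    obtain ⟨i, hi, rfl⟩ := hmemS x hx
    have h1 : (c i : ℤ) ≤ i := by exact_mod_cast hle i hi
    have h2 : (i : ℤ) ≤ (m:ℤ) * i := by
      nlinarith [Int.natCast_pos.2 hm, Int.ofNat_nonneg i]
    simp only [hω]
    omega
  have hσle : ∀ j, j ≤ N → σ j ≤ (m:ℤ) * j := by
    intro j hj
    by_contra hcon
    push_neg at hcon
    have h1 : S.countP (fun x => decide (x ≤ (m:ℤ)*j)) ≤ j :=
      sorted_countP_le hsort (by omega) hcon
    have h2 : L.countP (fun x => decide (x ≤ (m:ℤ)*j)) ≤ j := by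
      rw [← hperm.countP_eq]
      exact h1
    have h3 : j + 1 ≤ L.countP (fun x => decide (x ≤ (m:ℤ)*j)) := by
      rw [hL, List.countP_map]
      have hsplit : List.range (N+1) = List.range (j+1)
          ++ List.map (fun x => (j+1) + x) (List.range (N-j)) := by
        rw [← List.range_add]
        congr 1
        omega
      rw [hsplit, List.countP_append]
      have hfull : List.countP ((fun x => decide (x ≤ (m:ℤ)*j)) ∘ ω) (List.range (j+1))
          = (List.range (j+1)).length := by
        rw [List.countP_eq_length]
        intro i hi
        have hij : i ≤ j := by simpa [Nat.lt_succ_iff] using List.mem_range.1 hi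
        simp only [Function.comp_apply, decide_eq_true_eq, hω]
        have h4 : (c i : ℤ) ≥ 0 := Int.ofNat_nonneg _
        have h5 : (m:ℤ)*i ≤ (m:ℤ)*j :=
          mul_le_mul_of_nonneg_left (by exact_mod_cast hij) (Int.ofNat_nonneg m)
        omega
      rw [hfull]
      simp
    omega
  have hσmono : ∀ i j, i ≤ j → j ≤ N → σ i ≤ σ j := by
    intro i j hij hj
    exact sorted_getD_mono hsort hij (by omega)
  have hgap : ∀ j, j < N → σ (j+1) ≤ σ j + m := by
    intro j hjN
    by_contra hcon
    push_neg at hcon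
    have hσjS : σ j ∈ S := getD_mem (by omega)
    have hσj0 : 0 ≤ σ j := hnonneg _ hσjS
    set T : Finset ℕ := (Finset.range (N+1)).filter (fun i => σ j < ω i) with hT
    have hne : T.Nonempty := by
      have hmem : σ (j+1) ∈ S := getD_mem (by omega)
      obtain ⟨i, hi, he⟩ := hmemS _ hmem
      refine ⟨i, ?_⟩
      rw [hT, Finset.mem_filter]
      refine ⟨Finset.mem_range.2 (by omega), ?_⟩
      rw [he]
      have : (0:ℤ) ≤ m := Int.ofNat_nonneg m
      omega
    set i₁ := T.min' hne with hi₁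
    have hi₁mem : i₁ ∈ T := T.min'_mem hne
    obtain ⟨hi₁r, hi₁gt⟩ := Finset.mem_filter.1 hi₁mem
    have hi₁N : i₁ < N + 1 := Finset.mem_range.1 hi₁r
    have h0T : ¬ (σ j < ω 0) := by
      simp only [hω]
      push_neg
      simp only [Nat.cast_zero, mul_zero, zero_sub]
      have : (0:ℤ) ≤ c 0 := Int.ofNat_nonneg _
      omega
    have hi₁pos : 1 ≤ i₁ := by
      by_contra hcon2
      push_neg at hcon2
      interval_cases i₁
      exact h0T hi₁gt
    have hup : σ (j+1) ≤ ω i₁ :=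
      sorted_gt_getD hsort (hωmemS i₁ (by omega)) hi₁gt (by omega)
    have hstep : ω i₁ - ω (i₁ - 1) ≤ m := by
      have hc : c (i₁ - 1) ≤ c i₁ := hmono (i₁ - 1) i₁ (by omega) (by omega)
      have he : ((i₁ - 1 : ℕ) : ℤ) = (i₁ : ℤ) - 1 := by omega
      simp only [hω, he]
      have : (m:ℤ) * ((i₁:ℤ) - 1) = (m:ℤ)*i₁ - m := by ring
      rw [this]
      have : (c (i₁-1) : ℤ) ≤ (c i₁ : ℤ) := by exact_mod_cast hc
      omega
    have hprev : σ j < ω (i₁ - 1) := by omega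
    have : i₁ ≤ i₁ - 1 :=
      Finset.min'_le T _ (Finset.mem_filter.2 ⟨Finset.mem_range.2 (by omega), hprev⟩)
    omega
  refine ⟨fun j => ((m:ℤ)*j - σ j).toNat, ?_, ?_, ?_, ?_⟩
  · have h1 : σ 0 ≤ 0 := by simpa using hσle 0 (Nat.zero_le _)
    have h2 : 0 ≤ σ 0 := hnonneg _ (getD_mem (by omega))
    simp only [Nat.cast_zero, mul_zero]
    omega
  · have hcast : ∀ j, j ≤ N → ((((m:ℤ)*j - σ j).toNat : ℤ)) = (m:ℤ)*j - σ j := by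
      intro j hj
      exact Int.toNat_of_nonneg (by have := hσle j hj; omega)
    have step : ∀ j, j < N → ((m:ℤ)*j - σ j).toNat ≤ ((m:ℤ)*(j+1) - σ (j+1)).toNat := by
      intro j hj
      have h1 := hgap j hj
      have h2 : (m:ℤ)*((j:ℤ)+1) = (m:ℤ)*j + m := by ring
      have h3 := hcast j (by omega)
      have h4 := hcast (j+1) (by omega)
      push_cast at h3 h4 ⊢
      omega
    intro j k hjk hk
    induction k with
    | zero =>
      have : j = 0 := by omega
      subst this
      exact le_refl _
    | succ k ih =>
      rcases Nat.eq_or_lt_of_le hjk with rfl | h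
      · exact le_refl _
      · push_cast
        push_cast at ih step
        exact le_trans (ih (by omega) (by omega)) (step k (by omega))
  · intro j hj
    have h1 := hσmono j (j+1) (by omega) (by omega)
    have h2 : (m:ℤ)*((j:ℤ)+1) = (m:ℤ)*j + m := by ring
    have h3 : ((((m:ℤ)*j - σ j).toNat : ℤ)) = (m:ℤ)*j - σ j :=
      Int.toNat_of_nonneg (by have := hσle j (by omega); omega)
    have h4 : ((((m:ℤ)*(j+1:ℕ) - σ (j+1)).toNat : ℤ)) = (m:ℤ)*(j+1:ℕ) - σ (j+1) :=
      Int.toNat_of_nonneg (by have := hσle (j+1) (by omega); omega)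
    push_cast at h3 h4 ⊢
    omega
  · intro x
    have hLHS : ∏ j ∈ Finset.range (N+1), (x - ((m:ℤ)*j - (((m:ℤ)*j - σ j).toNat : ℤ)))
        = ∏ j ∈ Finset.range (N+1), (x - σ j) := by
      apply Finset.prod_congr rfl
      intro j hj
      have hj' : j ≤ N := by simpa [Nat.lt_succ_iff] using Finset.mem_range.1 hj
      have h3 : ((((m:ℤ)*j - σ j).toNat : ℤ)) = (m:ℤ)*j - σ j :=
        Int.toNat_of_nonneg (by have := hσle j hj'; omega)
      rw [h3]
      ring
    rw [hLHS]
    have h5 : ∏ j ∈ Finset.range (N+1), (x - σ j) = (S.map (fun y => x - y)).prod := by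
      rw [← hlen]
      exact prod_getD S (fun y => x - y)
    have h6 : (S.map (fun y => x - y)).prod = (L.map (fun y => x - y)).prod :=
      (hperm.map _).prod_eq
    have h7 : (L.map (fun y => x - y)).prod
        = ∏ j ∈ Finset.range (N+1), (x - ω j) := by
      rw [hL, List.map_map, finset_prod_eq_list]
      rfl
    rw [h5, h6, h7]


lemma mono_of_step (N : ℕ) (u : ℕ → ℤ) (h : ∀ j, j < N → u j ≤ u (j+1)) :
    ∀ j k, j ≤ k → k ≤ N → u j ≤ u k := by
  intro j k hjk hk
  induction k with
  | zero =>
    have : j = 0 := by omega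
    subst this
    exact le_refl _
  | succ k ih =>
    rcases Nat.eq_or_lt_of_le hjk with rfl | hlt
    · exact le_refl _
    · exact le_trans (ih (by omega) (by omega)) (h k (by omega))

end URR

/-- Theorem 7.3: every Ferrers board `B = (b_0,…,b_n)` with `b_0 = 0` is `m`-weight
file equivalent to a unique `m`-restricted board (given here padded to
`N = |B|` columns, i.e. indices `0,…,N`); equivalently, the weakly increasing
rearrangement of `ω_m(B)` is the `m`-weight root vector of an `m`-restricted board. -/
theorem unique_m_restricted_representative (m n N : ℕ) (hm : 0 < m) (b : ℕ → ℕ)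
    (hb0 : b 0 = 0) (hmono : ∀ j k, j ≤ k → k ≤ n → b j ≤ b k)
    (hN : N = ∑ j ∈ Finset.range (n + 1), b j) :
    ∃ b' : ℕ → ℕ,
      (b' 0 = 0 ∧ (∀ j k, j ≤ k → k ≤ N → b' j ≤ b' k) ∧
        (∀ j < N, b' (j + 1) ≤ b' j + m) ∧
        (∀ k, fkm m b' N k = fkm m b n k)) ∧
      ∀ b'' : ℕ → ℕ,
        (b'' 0 = 0 ∧ (∀ j k, j ≤ k → k ≤ N → b'' j ≤ b'' k) ∧
          (∀ j < N, b'' (j + 1) ≤ b'' j + m) ∧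
          (∀ k, fkm m b'' N k = fkm m b n k)) →
        ∀ j ≤ N, b'' j = b' j := by
  classical
  set ct : ℕ → ℕ := URR.bt n N b with hct
  have ctmono : ∀ j k, j ≤ k → k ≤ N → ct j ≤ ct k := URR.bt_mono hmono
  have ctle : ∀ j, j ≤ N → ct j ≤ j := URR.bt_le hmono hN
  -- fkm of padded board equals fkm of b
  have hfk : ∀ k, fkm m ct N k = fkm m b n k := by
    intro k
    rcases le_or_gt n N with hge | hlt
    · exact URR.fkm_of_image m b ct n N (N - n) (URR.cells_bt_ge hmono hge) k
    · exact (URR.fkm_of_image m ct b N n (n - N) (URR.cells_bt_lt hmono hN hlt) k).symm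
  obtain ⟨b', hb'0, hb'mono, hb'res, hb'prod⟩ :=
    URR.exists_bprime m N hm ct ctmono ctle
  -- product form with board heights
  have prodswap : ∀ (d : ℕ → ℕ) (x : ℤ),
      ∏ j ∈ Finset.range (N+1), (x + (d j:ℤ) - (m:ℤ)*j)
        = ∏ j ∈ Finset.range (N+1), (x - ((m:ℤ)*j - d j)) := by
    intro d x
    apply Finset.prod_congr rfl
    intro j _
    ring
  have fact_b' := URR.factorization m b' N hb'mono
  have fact_ct := URR.factorization m ct N ctmono
  have hsum_eq : ∀ x : ℤ,
      ∑ k ∈ Finset.range (N+2), fkm m b' N k * fallFact x (N+1-k) m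
        = ∑ k ∈ Finset.range (N+2), fkm m ct N k * fallFact x (N+1-k) m := by
    intro x
    rw [fact_b' x, fact_ct x, prodswap b' x, prodswap ct x, hb'prod x]
  have hcoeff : ∀ k, k ≤ N + 1 → fkm m b' N k = fkm m ct N k := by
    have := URR.coeff_unique' m hm (N+1) (fkm m b' N) (fkm m ct N)
      (fun x => by
        have h := hsum_eq x
        simpa [show N + 1 + 1 = N + 2 from rfl] using h)
    exact this
  have hb'fk : ∀ k, fkm m b' N k = fkm m b n k := by
    intro k
    rcases le_or_gt k (N+1) with hk | hk
    · rw [hcoeff k hk, hfk k]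
    · rw [URR.fkm_big m b' N k hk, ← hfk k, URR.fkm_big m ct N k hk]
  refine ⟨b', ⟨hb'0, hb'mono, hb'res, hb'fk⟩, ?_⟩
  rintro b'' ⟨hb''0, hb''mono, hb''res, hb''fk⟩
  -- coefficients of b'' and b' agree, hence products agree
  have hceq : ∀ k, fkm m b'' N k = fkm m b' N k := by
    intro k
    rw [hb''fk k, ← hb'fk k]
  have fact_b'' := URR.factorization m b'' N hb''mono
  have hprod_eq : ∀ x : ℤ,
      ∏ j ∈ Finset.range (N+1), (x - ((m:ℤ)*j - b'' j))
        = ∏ j ∈ Finset.range (N+1), (x - ((m:ℤ)*j - b' j)) := by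
    intro x
    rw [← prodswap b'' x, ← prodswap b' x, ← fact_b'' x, ← fact_b' x]
    apply Finset.sum_congr rfl
    intro k _
    rw [hceq k]
  have hmulti := URR.roots_multiset_eq N (fun j => (m:ℤ)*j - b'' j)
    (fun j => (m:ℤ)*j - b' j) hprod_eq
  have hu : ∀ j k, j ≤ k → k ≤ N → (m:ℤ)*j - b'' j ≤ (m:ℤ)*k - b'' k := by
    apply URR.mono_of_step
    intro j hj
    have h1 := hb''res j hj
    have h2 : (m:ℤ)*((j:ℤ)+1) = (m:ℤ)*j + m := by ring
    have h3 : (b'' (j+1) : ℤ) ≤ (b'' j : ℤ) + m := by exact_mod_cast h1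
    push_cast
    omega
  have hv : ∀ j k, j ≤ k → k ≤ N → (m:ℤ)*j - b' j ≤ (m:ℤ)*k - b' k := by
    apply URR.mono_of_step
    intro j hj
    have h1 := hb'res j hj
    have h2 : (m:ℤ)*((j:ℤ)+1) = (m:ℤ)*j + m := by ring
    have h3 : (b' (j+1) : ℤ) ≤ (b' j : ℤ) + m := by exact_mod_cast h1
    push_cast
    omega
  have := URR.mono_seq_eq N _ _ hu hv hmulti
  intro j hj
  have h := this j hj
  have : (b'' j : ℤ) = (b' j : ℤ) := by omega
  exact_mod_cast this
end
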